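/- The function φ = 1/2 + (x²-2x+6)·y/(2(x²-10)²) on the curve y² = x⁴+4x³-40x²-200x+500 satisfies 4·φ·(1-φ) = 64(4x-5)³/(x²-10)⁴ whenever x²-10 ≠ 0. -/

import Mathlib

/-- On the genus 1 curve `y² = x⁴+4x³-40x²-200x+500`, the function
`φ = 1/2 + (x²-2x+6)·y/(2(x²-10)²)` satisfies
`4·φ·(1-φ) = 64(4x-5)³/(x²-10)⁴` whenever `x²-10 ≠ 0`. -/
theorem stmt_5 (x y : ℂ)
    (hE : y ^ 2 = x ^ 4 + 4 * x ^ 3 - 40 * x ^ 2 - 200 * x + 500)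
    (hx : x ^ 2 - 10 ≠ 0) :
    (4 : ℂ) * (1 / 2 + (x ^ 2 - 2 * x + 6) * y / (2 * (x ^ 2 - 10) ^ 2)) *
        (1 - (1 / 2 + (x ^ 2 - 2 * x + 6) * y / (2 * (x ^ 2 - 10) ^ 2))) =
      64 * (4 * x - 5) ^ 3 / (x ^ 2 - 10) ^ 4 := by
  field_simp
  linear_combination (-4*(x^2-2*x+6)^2) * hE
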